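/- For the rotational surface of hyperbolic type X with unit normal N(t,θ) := ((yz' − zy')cosh θ, (yz' − zy')sinh θ, xz' − x'z, x'y − xy'), for all (t,θ): ∂N/∂t = ((x₁ − x₁'')/√(−1 + x₁² − (x₁')²))·∂X/∂t and ∂N/∂θ = (√(−1 + x₁² − (x₁')²)/x₁)·∂X/∂θ. (Thus the principal curvatures of X in H³ with respect to N are −λ₁ = −(x₁ − x₁'')/√(−1 + x₁² − (x₁')²) and −λ₂ = −√(−1 + x₁² − (x₁')²)/x₁.) -/

import Mathlib

open Set

/-- `φ(t) = ∫₀ᵗ √(−1 + x₁² − x₁'²)/(x₁² − 1) dσ` for the hyperbolic-type rotational surface. -/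
noncomputable def hypPhi (x₁ : ℝ → ℝ) (t : ℝ) : ℝ :=
  ∫ σ in (0:ℝ)..t, Real.sqrt (-1 + x₁ σ ^ 2 - deriv x₁ σ ^ 2) / (x₁ σ ^ 2 - 1)

/-- `x(t) = x₁(t)`. -/
noncomputable def hypx (x₁ : ℝ → ℝ) (t : ℝ) : ℝ := x₁ t

/-- `y(t) = √(x₁² − 1)·cos φ`. -/
noncomputable def hypy (x₁ : ℝ → ℝ) (t : ℝ) : ℝ :=
  Real.sqrt (x₁ t ^ 2 - 1) * Real.cos (hypPhi x₁ t)

/-- `z(t) = √(x₁² − 1)·sin φ`. -/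
noncomputable def hypz (x₁ : ℝ → ℝ) (t : ℝ) : ℝ :=
  Real.sqrt (x₁ t ^ 2 - 1) * Real.sin (hypPhi x₁ t)

/-- The rotational surface of hyperbolic type `X(t,θ) = (x cosh θ, x sinh θ, y, z)`. -/
noncomputable def hypX (x₁ : ℝ → ℝ) (t θ : ℝ) : ℝ × ℝ × ℝ × ℝ :=
  (hypx x₁ t * Real.cosh θ, hypx x₁ t * Real.sinh θ, hypy x₁ t, hypz x₁ t)

/-- The unit normal
`N(t,θ) = ((yz' − zy')cosh θ, (yz' − zy')sinh θ, xz' − x'z, x'y − xy')`. -/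
noncomputable def hypN (x₁ : ℝ → ℝ) (t θ : ℝ) : ℝ × ℝ × ℝ × ℝ :=
  ((hypy x₁ t * deriv (hypz x₁) t - hypz x₁ t * deriv (hypy x₁) t) * Real.cosh θ,
   (hypy x₁ t * deriv (hypz x₁) t - hypz x₁ t * deriv (hypy x₁) t) * Real.sinh θ,
   hypx x₁ t * deriv (hypz x₁) t - deriv (hypx x₁) t * hypz x₁ t,
   deriv (hypx x₁) t * hypy x₁ t - hypx x₁ t * deriv (hypy x₁) t)

lemma keyW (X P Sn C r q : ℝ) (hrne : r ≠ 0) (hr2 : r^2 = X^2-1) (hsc : Sn^2 + C^2 = 1) :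
    (r*C) * ((X*P*Sn + q*C)/r) - (r*Sn) * ((X*P*C - q*Sn)/r) = q := by
  field_simp
  linear_combination q * hsc

lemma keyI3 (X P Sn C r q : ℝ) (hrne : r ≠ 0) (hr2 : r^2 = X^2-1) :
    X * ((X*P*Sn + q*C)/r) - P * (r*Sn) = (P*Sn + X*q*C)/r := by
  field_simp
  linear_combination (-(P*Sn)) * hr2

lemma keyI4 (X P Sn C r q : ℝ) (hrne : r ≠ 0) (hr2 : r^2 = X^2-1) :
    P * (r*C) - X * ((X*P*C - q*Sn)/r) = (X*q*Sn - P*C)/r := by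
  field_simp
  linear_combination (P*C) * hr2

lemma key3 (X P A Sn C r q : ℝ) (hrne : r ≠ 0) (hqne : q ≠ 0)
    (hr2 : r^2 = X^2-1) (hq2 : q^2 = -1 + X^2 - P^2) :
    (X - A)/q * ((X*P*C - q*Sn)/r)
    = (((A*Sn + P*(C*(q/(X^2-1)))) + ((P*q + X*((X-A)*P/q))*C + X*q*(-Sn*(q/(X^2-1))))) * r
       - (P*Sn + X*q*C) * (X*P/r)) / r^2 := by
  rw [← hr2]
  field_simp
  linear_combination ((-1)*P*C*r^5*q^3 + (-1)*X*Sn*r*q^2 + (-1)*X*Sn*r*q^4 + X*Sn*r^3*q^2 + X*Sn*r^3*q^4 + (-1)*X*Sn*r^5*q^2 + (-1)*X*P^2*Sn*r*q^2 + X*P^2*Sn*r^3*q^2 + 2*X^3*Sn*r*q^2 + X^3*Sn*r*q^4 + (-1)*X^3*Sn*r^3*q^2 + X^3*P^2*Sn*r*q^2 + (-1)*X^5*Sn*r*q^2) * hr2 + (X*Sn*r*q^2 + (-2)*X^3*Sn*r*q^2 + X^5*Sn*r*q^2) * hq2 + (X*q*Sn - X*q^2*Sn*r^5) * hq2 - ((X*q*Sn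 - X*q^2*Sn*r^5) + (P*C*q^2 - P*C*q^3*r^5)) * hr2

lemma key4 (X P A Sn C r q : ℝ) (hrne : r ≠ 0) (hqne : q ≠ 0)
    (hr2 : r^2 = X^2-1) (hq2 : q^2 = -1 + X^2 - P^2) :
    (X - A)/q * ((X*P*Sn + q*C)/r)
    = ((((P*q + X*((X-A)*P/q))*Sn + X*q*(C*(q/(X^2-1)))) - (A*C + P*(-Sn*(q/(X^2-1))))) * r
       - (X*q*Sn - P*C) * (X*P/r)) / r^2 := by
  rw [← hr2]
  field_simp
  linear_combination ((-1)*P*Sn*r^5*q^3 + X*C*r*q^2 + X*C*r*q^4 + (-1)*X*C*r^3*q^2 + (-1)*X*C*r^3*q^4 + X*C*r^5*q^2 + X*P^2*C*r*q^2 + (-1)*X*P^2*C*r^3*q^2 + (-2)*X^3*C*r*q^2 + (-1)*X^3*C*r*q^4 + X^3*C*r^3*q^2 + (-1)*X^3*P^2*C*r*q^2 + X^5*C*r*q^2) * hr2 + ((-1)*X*C*r*q^2 + 2*X^3*C*r*q^2 + (-1)*X^5*C*r*q^2) * hq2 + (-(X*q*C - X*q^2*C*r^5)) * hq2 - ((-(X*q*C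 - X*q^2*C*r^5)) + (P*Sn*q^2 - P*Sn*q^3*r^5)) * hr2

/-- For the hyperbolic-type rotational surface, `∂N/∂t = λ₁·∂X/∂t` and `∂N/∂θ = λ₂·∂X/∂θ`
with `λ₁ = (x₁ − x₁'')/√(−1 + x₁² − (x₁')²)` and `λ₂ = √(−1 + x₁² − (x₁')²)/x₁`. -/
theorem stmt_11 (a b : ℝ) (h0 : (0:ℝ) ∈ Ioo a b) (x₁ : ℝ → ℝ)
    (hx₁ : ContDiffOn ℝ 2 x₁ (Ioo a b))
    (hbig : ∀ t ∈ Ioo a b, 1 < x₁ t)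
    (hQ : ∀ t ∈ Ioo a b, 0 < -1 + x₁ t ^ 2 - deriv x₁ t ^ 2) :
    ∀ t ∈ Ioo a b, ∀ θ : ℝ,
      deriv (fun s => hypN x₁ s θ) t =
        ((x₁ t - deriv (deriv x₁) t) / Real.sqrt (-1 + x₁ t ^ 2 - deriv x₁ t ^ 2)) •
          deriv (fun s => hypX x₁ s θ) t ∧
      deriv (fun ψ => hypN x₁ t ψ) θ =
        (Real.sqrt (-1 + x₁ t ^ 2 - deriv x₁ t ^ 2) / x₁ t) •
          deriv (fun ψ => hypX x₁ t ψ) θ := by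
  have hS : IsOpen (Ioo a b) := isOpen_Ioo
  have hXd : ∀ s ∈ Ioo a b, HasDerivAt x₁ (deriv x₁ s) s := by
    intro s hs
    exact ((hx₁.differentiableOn (by norm_num)).differentiableAt (hS.mem_nhds hs)).hasDerivAt
  have hx₁' : ContDiffOn ℝ 1 (deriv x₁) (Ioo a b) := hx₁.deriv_of_isOpen hS (by norm_num)
  have hXd2 : ∀ s ∈ Ioo a b, HasDerivAt (deriv x₁) (deriv (deriv x₁) s) s := by
    intro s hs
    exact ((hx₁'.differentiableOn (by norm_num)).differentiableAt (hS.mem_nhds hs)).hasDerivAt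
  have hcx : ContinuousOn x₁ (Ioo a b) := hx₁.continuousOn
  have hcx' : ContinuousOn (deriv x₁) (Ioo a b) := hx₁'.continuousOn
  have hrpos : ∀ s ∈ Ioo a b, 0 < x₁ s ^ 2 - 1 := fun s hs => by nlinarith [hbig s hs]
  have hfc : ContinuousOn
      (fun σ => Real.sqrt (-1 + x₁ σ ^ 2 - deriv x₁ σ ^ 2) / (x₁ σ ^ 2 - 1)) (Ioo a b) := by
    apply ContinuousOn.div
    · exact (Real.continuous_sqrt).comp_continuousOn
        ((continuousOn_const.add (hcx.pow 2)).sub (hcx'.pow 2))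
    · exact (hcx.pow 2).sub continuousOn_const
    · exact fun s hs => ne_of_gt (hrpos s hs)
  have hφ : ∀ s ∈ Ioo a b, HasDerivAt (hypPhi x₁)
      (Real.sqrt (-1 + x₁ s ^ 2 - deriv x₁ s ^ 2) / (x₁ s ^ 2 - 1)) s := by
    intro s hs
    have hsub : uIcc (0:ℝ) s ⊆ Ioo a b := (ordConnected_Ioo).uIcc_subset h0 hs
    exact intervalIntegral.integral_hasDerivAt_right
      ((hfc.mono hsub).intervalIntegrable)
      (hfc.stronglyMeasurableAtFilter hS s hs)
      (hfc.continuousAt (hS.mem_nhds hs))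
  have hr : ∀ s ∈ Ioo a b, HasDerivAt (fun u => Real.sqrt (x₁ u ^ 2 - 1))
      (x₁ s * deriv x₁ s / Real.sqrt (x₁ s ^ 2 - 1)) s := by
    intro s hs
    have h1 : HasDerivAt (fun u => x₁ u ^ 2 - 1) (2 * x₁ s * deriv x₁ s) s := by
      simpa [mul_comm, mul_assoc] using (((hXd s hs).pow 2).sub_const 1)
    have h2 := h1.sqrt (ne_of_gt (hrpos s hs))
    convert h2 using 1
    have hrne : Real.sqrt (x₁ s ^ 2 - 1) ≠ 0 := ne_of_gt (Real.sqrt_pos.2 (hrpos s hs))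
    field_simp
  have hsQ : ∀ s ∈ Ioo a b, HasDerivAt (fun u => Real.sqrt (-1 + x₁ u ^ 2 - deriv x₁ u ^ 2))
      ((x₁ s - deriv (deriv x₁) s) * deriv x₁ s / Real.sqrt (-1 + x₁ s ^ 2 - deriv x₁ s ^ 2)) s := by
    intro s hs
    have h1 : HasDerivAt (fun u => -1 + x₁ u ^ 2 - deriv x₁ u ^ 2)
        (2 * x₁ s * deriv x₁ s - 2 * deriv x₁ s * deriv (deriv x₁) s) s := by
      have := ((((hXd s hs).pow 2).const_add (-1)).sub ((hXd2 s hs).pow 2))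
      exact this.congr_deriv (by ring)
    have h2 := h1.sqrt (ne_of_gt (hQ s hs))
    convert h2 using 1
    have hQne : Real.sqrt (-1 + x₁ s ^ 2 - deriv x₁ s ^ 2) ≠ 0 :=
      ne_of_gt (Real.sqrt_pos.2 (hQ s hs))
    field_simp
  have hy' : ∀ s ∈ Ioo a b, HasDerivAt (hypy x₁)
      ((x₁ s * deriv x₁ s * Real.cos (hypPhi x₁ s)
        - Real.sqrt (-1 + x₁ s ^ 2 - deriv x₁ s ^ 2) * Real.sin (hypPhi x₁ s))
        / Real.sqrt (x₁ s ^ 2 - 1)) s := by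
    intro s hs
    have h := (hr s hs).mul ((hφ s hs).cos)
    have e : hypy x₁ = fun u => Real.sqrt (x₁ u ^ 2 - 1) * Real.cos (hypPhi x₁ u) := rfl
    rw [e]
    refine h.congr_deriv (Eq.symm ?_)
    have hrne : Real.sqrt (x₁ s ^ 2 - 1) ≠ 0 := ne_of_gt (Real.sqrt_pos.2 (hrpos s hs))
    have hr2 : Real.sqrt (x₁ s ^ 2 - 1) ^ 2 = x₁ s ^ 2 - 1 :=
      Real.sq_sqrt (le_of_lt (hrpos s hs))
    rw [← hr2]
    field_simp
    rw [Real.sqrt_sq (Real.sqrt_nonneg _)]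
    ring
  have hz' : ∀ s ∈ Ioo a b, HasDerivAt (hypz x₁)
      ((x₁ s * deriv x₁ s * Real.sin (hypPhi x₁ s)
        + Real.sqrt (-1 + x₁ s ^ 2 - deriv x₁ s ^ 2) * Real.cos (hypPhi x₁ s))
        / Real.sqrt (x₁ s ^ 2 - 1)) s := by
    intro s hs
    have h := (hr s hs).mul ((hφ s hs).sin)
    have e : hypz x₁ = fun u => Real.sqrt (x₁ u ^ 2 - 1) * Real.sin (hypPhi x₁ u) := rfl
    rw [e]
    refine h.congr_deriv (Eq.symm ?_)
    have hrne : Real.sqrt (x₁ s ^ 2 - 1) ≠ 0 := ne_of_gt (Real.sqrt_pos.2 (hrpos s hs))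
    have hr2 : Real.sqrt (x₁ s ^ 2 - 1) ^ 2 = x₁ s ^ 2 - 1 :=
      Real.sq_sqrt (le_of_lt (hrpos s hs))
    rw [← hr2]
    field_simp
    rw [Real.sqrt_sq (Real.sqrt_nonneg _)]
    ring
  -- pointwise identities for the components of N
  have hwid : ∀ s ∈ Ioo a b,
      hypy x₁ s * deriv (hypz x₁) s - hypz x₁ s * deriv (hypy x₁) s
        = Real.sqrt (-1 + x₁ s ^ 2 - deriv x₁ s ^ 2) := by
    intro s hs
    rw [(hz' s hs).deriv, (hy' s hs).deriv]
    exact keyW (x₁ s) (deriv x₁ s) (Real.sin (hypPhi x₁ s)) (Real.cos (hypPhi x₁ s))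
      (Real.sqrt (x₁ s ^ 2 - 1)) (Real.sqrt (-1 + x₁ s ^ 2 - deriv x₁ s ^ 2))
      (ne_of_gt (Real.sqrt_pos.2 (hrpos s hs))) (Real.sq_sqrt (le_of_lt (hrpos s hs)))
      (Real.sin_sq_add_cos_sq _)
  have h3id : ∀ s ∈ Ioo a b,
      hypx x₁ s * deriv (hypz x₁) s - deriv (hypx x₁) s * hypz x₁ s
        = (deriv x₁ s * Real.sin (hypPhi x₁ s)
          + x₁ s * Real.sqrt (-1 + x₁ s ^ 2 - deriv x₁ s ^ 2) * Real.cos (hypPhi x₁ s))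
          / Real.sqrt (x₁ s ^ 2 - 1) := by
    intro s hs
    have e : deriv (hypx x₁) s = deriv x₁ s := rfl
    rw [e, (hz' s hs).deriv]
    have := keyI3 (x₁ s) (deriv x₁ s) (Real.sin (hypPhi x₁ s)) (Real.cos (hypPhi x₁ s))
      (Real.sqrt (x₁ s ^ 2 - 1)) (Real.sqrt (-1 + x₁ s ^ 2 - deriv x₁ s ^ 2))
      (ne_of_gt (Real.sqrt_pos.2 (hrpos s hs))) (Real.sq_sqrt (le_of_lt (hrpos s hs)))
    exact this
  have h4id : ∀ s ∈ Ioo a b,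
      deriv (hypx x₁) s * hypy x₁ s - hypx x₁ s * deriv (hypy x₁) s
        = (x₁ s * Real.sqrt (-1 + x₁ s ^ 2 - deriv x₁ s ^ 2) * Real.sin (hypPhi x₁ s)
          - deriv x₁ s * Real.cos (hypPhi x₁ s))
          / Real.sqrt (x₁ s ^ 2 - 1) := by
    intro s hs
    have e : deriv (hypx x₁) s = deriv x₁ s := rfl
    rw [e, (hy' s hs).deriv]
    have := keyI4 (x₁ s) (deriv x₁ s) (Real.sin (hypPhi x₁ s)) (Real.cos (hypPhi x₁ s))
      (Real.sqrt (x₁ s ^ 2 - 1)) (Real.sqrt (-1 + x₁ s ^ 2 - deriv x₁ s ^ 2))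
      (ne_of_gt (Real.sqrt_pos.2 (hrpos s hs))) (Real.sq_sqrt (le_of_lt (hrpos s hs)))
    exact this
  intro t ht θ
  have hrne : Real.sqrt (x₁ t ^ 2 - 1) ≠ 0 := ne_of_gt (Real.sqrt_pos.2 (hrpos t ht))
  have hqne : Real.sqrt (-1 + x₁ t ^ 2 - deriv x₁ t ^ 2) ≠ 0 :=
    ne_of_gt (Real.sqrt_pos.2 (hQ t ht))
  have hr2 : Real.sqrt (x₁ t ^ 2 - 1) ^ 2 = x₁ t ^ 2 - 1 :=
    Real.sq_sqrt (le_of_lt (hrpos t ht))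
  have hq2 : Real.sqrt (-1 + x₁ t ^ 2 - deriv x₁ t ^ 2) ^ 2 = -1 + x₁ t ^ 2 - deriv x₁ t ^ 2 :=
    Real.sq_sqrt (le_of_lt (hQ t ht))
  constructor
  · -- t-derivative
    -- components 1 and 2
    have H1 : HasDerivAt
        (fun s => (hypy x₁ s * deriv (hypz x₁) s - hypz x₁ s * deriv (hypy x₁) s) * Real.cosh θ)
        (((x₁ t - deriv (deriv x₁) t) * deriv x₁ t / Real.sqrt (-1 + x₁ t ^ 2 - deriv x₁ t ^ 2))
          * Real.cosh θ) t := by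
      refine ((hsQ t ht).mul_const _).congr_of_eventuallyEq ?_
      exact Filter.eventuallyEq_of_mem (hS.mem_nhds ht) (fun s hs => by rw [hwid s hs])
    have H2 : HasDerivAt
        (fun s => (hypy x₁ s * deriv (hypz x₁) s - hypz x₁ s * deriv (hypy x₁) s) * Real.sinh θ)
        (((x₁ t - deriv (deriv x₁) t) * deriv x₁ t / Real.sqrt (-1 + x₁ t ^ 2 - deriv x₁ t ^ 2))
          * Real.sinh θ) t := by
      refine ((hsQ t ht).mul_const _).congr_of_eventuallyEq ?_
      exact Filter.eventuallyEq_of_mem (hS.mem_nhds ht) (fun s hs => by rw [hwid s hs])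
    -- component 3
    have hu3 : HasDerivAt (fun s => deriv x₁ s * Real.sin (hypPhi x₁ s)
        + x₁ s * Real.sqrt (-1 + x₁ s ^ 2 - deriv x₁ s ^ 2) * Real.cos (hypPhi x₁ s))
        ((deriv (deriv x₁) t * Real.sin (hypPhi x₁ t)
          + deriv x₁ t * (Real.cos (hypPhi x₁ t) * (Real.sqrt (-1 + x₁ t ^ 2 - deriv x₁ t ^ 2) / (x₁ t ^ 2 - 1))))
         + ((deriv x₁ t * Real.sqrt (-1 + x₁ t ^ 2 - deriv x₁ t ^ 2)
              + x₁ t * ((x₁ t - deriv (deriv x₁) t) * deriv x₁ t / Real.sqrt (-1 + x₁ t ^ 2 - deriv x₁ t ^ 2)))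
              * Real.cos (hypPhi x₁ t)
            + x₁ t * Real.sqrt (-1 + x₁ t ^ 2 - deriv x₁ t ^ 2)
              * (-Real.sin (hypPhi x₁ t) * (Real.sqrt (-1 + x₁ t ^ 2 - deriv x₁ t ^ 2) / (x₁ t ^ 2 - 1))))) t :=
      ((hXd2 t ht).mul ((hφ t ht).sin)).add (((hXd t ht).mul (hsQ t ht)).mul ((hφ t ht).cos))
    have hg3 : HasDerivAt (fun s => (deriv x₁ s * Real.sin (hypPhi x₁ s)
        + x₁ s * Real.sqrt (-1 + x₁ s ^ 2 - deriv x₁ s ^ 2) * Real.cos (hypPhi x₁ s))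
        / Real.sqrt (x₁ s ^ 2 - 1))
        (((x₁ t - deriv (deriv x₁) t) / Real.sqrt (-1 + x₁ t ^ 2 - deriv x₁ t ^ 2))
          * ((x₁ t * deriv x₁ t * Real.cos (hypPhi x₁ t)
            - Real.sqrt (-1 + x₁ t ^ 2 - deriv x₁ t ^ 2) * Real.sin (hypPhi x₁ t))
            / Real.sqrt (x₁ t ^ 2 - 1))) t := by
      have := hu3.div (hr t ht) hrne
      refine this.congr_deriv (Eq.symm ?_)
      exact key3 (x₁ t) (deriv x₁ t) (deriv (deriv x₁) t) (Real.sin (hypPhi x₁ t))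
        (Real.cos (hypPhi x₁ t)) _ _ hrne hqne hr2 hq2
    have H3 : HasDerivAt
        (fun s => hypx x₁ s * deriv (hypz x₁) s - deriv (hypx x₁) s * hypz x₁ s)
        (((x₁ t - deriv (deriv x₁) t) / Real.sqrt (-1 + x₁ t ^ 2 - deriv x₁ t ^ 2))
          * ((x₁ t * deriv x₁ t * Real.cos (hypPhi x₁ t)
            - Real.sqrt (-1 + x₁ t ^ 2 - deriv x₁ t ^ 2) * Real.sin (hypPhi x₁ t))
            / Real.sqrt (x₁ t ^ 2 - 1))) t := by
      refine hg3.congr_of_eventuallyEq ?_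
      exact Filter.eventuallyEq_of_mem (hS.mem_nhds ht) (fun s hs => h3id s hs)
    -- component 4
    have hu4 : HasDerivAt (fun s => x₁ s * Real.sqrt (-1 + x₁ s ^ 2 - deriv x₁ s ^ 2) * Real.sin (hypPhi x₁ s)
        - deriv x₁ s * Real.cos (hypPhi x₁ s))
        (((deriv x₁ t * Real.sqrt (-1 + x₁ t ^ 2 - deriv x₁ t ^ 2)
              + x₁ t * ((x₁ t - deriv (deriv x₁) t) * deriv x₁ t / Real.sqrt (-1 + x₁ t ^ 2 - deriv x₁ t ^ 2)))
              * Real.sin (hypPhi x₁ t)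
            + x₁ t * Real.sqrt (-1 + x₁ t ^ 2 - deriv x₁ t ^ 2)
              * (Real.cos (hypPhi x₁ t) * (Real.sqrt (-1 + x₁ t ^ 2 - deriv x₁ t ^ 2) / (x₁ t ^ 2 - 1))))
         - (deriv (deriv x₁) t * Real.cos (hypPhi x₁ t)
            + deriv x₁ t * (-Real.sin (hypPhi x₁ t) * (Real.sqrt (-1 + x₁ t ^ 2 - deriv x₁ t ^ 2) / (x₁ t ^ 2 - 1))))) t :=
      (((hXd t ht).mul (hsQ t ht)).mul ((hφ t ht).sin)).sub ((hXd2 t ht).mul ((hφ t ht).cos))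
    have hg4 : HasDerivAt (fun s => (x₁ s * Real.sqrt (-1 + x₁ s ^ 2 - deriv x₁ s ^ 2) * Real.sin (hypPhi x₁ s)
        - deriv x₁ s * Real.cos (hypPhi x₁ s)) / Real.sqrt (x₁ s ^ 2 - 1))
        (((x₁ t - deriv (deriv x₁) t) / Real.sqrt (-1 + x₁ t ^ 2 - deriv x₁ t ^ 2))
          * ((x₁ t * deriv x₁ t * Real.sin (hypPhi x₁ t)
            + Real.sqrt (-1 + x₁ t ^ 2 - deriv x₁ t ^ 2) * Real.cos (hypPhi x₁ t))
            / Real.sqrt (x₁ t ^ 2 - 1))) t := by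
      have := hu4.div (hr t ht) hrne
      refine this.congr_deriv (Eq.symm ?_)
      have := key4 (x₁ t) (deriv x₁ t) (deriv (deriv x₁) t) (Real.sin (hypPhi x₁ t))
        (Real.cos (hypPhi x₁ t)) _ _ hrne hqne hr2 hq2
      linear_combination this
    have H4 : HasDerivAt
        (fun s => deriv (hypx x₁) s * hypy x₁ s - hypx x₁ s * deriv (hypy x₁) s)
        (((x₁ t - deriv (deriv x₁) t) / Real.sqrt (-1 + x₁ t ^ 2 - deriv x₁ t ^ 2))
          * ((x₁ t * deriv x₁ t * Real.sin (hypPhi x₁ t)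
            + Real.sqrt (-1 + x₁ t ^ 2 - deriv x₁ t ^ 2) * Real.cos (hypPhi x₁ t))
            / Real.sqrt (x₁ t ^ 2 - 1))) t := by
      refine hg4.congr_of_eventuallyEq ?_
      exact Filter.eventuallyEq_of_mem (hS.mem_nhds ht) (fun s hs => h4id s hs)
    have HN : HasDerivAt (fun s => hypN x₁ s θ) _ t := H1.prodMk (H2.prodMk (H3.prodMk H4))
    have HX : HasDerivAt (fun s => hypX x₁ s θ)
        (deriv x₁ t * Real.cosh θ, deriv x₁ t * Real.sinh θ,
         (x₁ t * deriv x₁ t * Real.cos (hypPhi x₁ t)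
            - Real.sqrt (-1 + x₁ t ^ 2 - deriv x₁ t ^ 2) * Real.sin (hypPhi x₁ t))
            / Real.sqrt (x₁ t ^ 2 - 1),
         (x₁ t * deriv x₁ t * Real.sin (hypPhi x₁ t)
            + Real.sqrt (-1 + x₁ t ^ 2 - deriv x₁ t ^ 2) * Real.cos (hypPhi x₁ t))
            / Real.sqrt (x₁ t ^ 2 - 1)) t :=
      ((hXd t ht).mul_const _).prodMk (((hXd t ht).mul_const _).prodMk ((hy' t ht).prodMk (hz' t ht)))
    rw [HN.deriv, HX.deriv]
    simp only [Prod.smul_mk, smul_eq_mul, Prod.mk.injEq]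
    exact ⟨by ring, by ring, trivial⟩
  · -- θ-derivative
    have HNθ : HasDerivAt (fun ψ => hypN x₁ t ψ)
        ((hypy x₁ t * deriv (hypz x₁) t - hypz x₁ t * deriv (hypy x₁) t) * Real.sinh θ,
         (hypy x₁ t * deriv (hypz x₁) t - hypz x₁ t * deriv (hypy x₁) t) * Real.cosh θ,
         (0:ℝ), (0:ℝ)) θ :=
      ((Real.hasDerivAt_cosh θ).const_mul _).prodMk
        (((Real.hasDerivAt_sinh θ).const_mul _).prodMk
          ((hasDerivAt_const θ _).prodMk (hasDerivAt_const θ _)))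
    have HXθ : HasDerivAt (fun ψ => hypX x₁ t ψ)
        (hypx x₁ t * Real.sinh θ, hypx x₁ t * Real.cosh θ, (0:ℝ), (0:ℝ)) θ :=
      ((Real.hasDerivAt_cosh θ).const_mul _).prodMk
        (((Real.hasDerivAt_sinh θ).const_mul _).prodMk
          ((hasDerivAt_const θ _).prodMk (hasDerivAt_const θ _)))
    rw [HNθ.deriv, HXθ.deriv]
    have hXne : x₁ t ≠ 0 := by have := hbig t ht; linarith
    have hw := hwid t ht
    have e : hypx x₁ t = x₁ t := rfl
    simp only [Prod.smul_mk, smul_eq_mul, Prod.mk.injEq, e, hw]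
    refine ⟨by field_simp, by field_simp, by simp, by simp⟩
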